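/- If X is a Banach space with numerical index n(X) = 1 that has the Bishop–Phelps–Bollobás point property for numerical radius (BPBpp-nu) with modulus η(ε), then X is uniformly smooth; specifically, whenever x₀ ∈ S_X and x₀* ∈ S_{X*} satisfy |x₀*(x₀)| > 1 − η(ε), there exists z* ∈ S_{X*} with |z*(x₀)| = 1 and ‖z* − x₀*‖ < ε. -/

import Mathlib

noncomputable section

open Filter Topology Pointwise

variable (𝕜 : Type*) [RCLike 𝕜] (X : Type*) [NormedAddCommGroup X] [NormedSpace 𝕜 X]

/-- `(x, f)` is a state of `X`: `x ∈ S_X`, `f ∈ S_{X*}`, `f x = 1`. -/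
def IsState (x : X) (f : X →L[𝕜] 𝕜) : Prop :=
  ‖x‖ = 1 ∧ ‖f‖ = 1 ∧ f x = 1

/-- The numerical radius `v(T) = sup {|f (T x)| : (x, f) ∈ Π(X)}`. -/
def nrad (T : X →L[𝕜] X) : ℝ :=
  sSup {r : ℝ | ∃ x f, IsState 𝕜 X x f ∧ r = ‖f (T x)‖}

/-- The numerical index `n(X) = inf {v(T) : ‖T‖ = 1}`. -/
def nindex : ℝ :=
  sInf {r : ℝ | ∃ T : X →L[𝕜] X, ‖T‖ = 1 ∧ r = nrad 𝕜 X T}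

lemma nrad_nonneg (T : X →L[𝕜] X) : 0 ≤ nrad 𝕜 X T :=
  Real.sSup_nonneg (by rintro r ⟨x, f, _, rfl⟩; positivity)

lemma nrad_le_norm (T : X →L[𝕜] X) : nrad 𝕜 X T ≤ ‖T‖ := by
  apply Real.sSup_le _ (norm_nonneg T)
  rintro r ⟨x, f, ⟨hx, hf, _⟩, rfl⟩
  calc ‖f (T x)‖ ≤ ‖f‖ * ‖T x‖ := f.le_opNorm _
    _ ≤ ‖f‖ * (‖T‖ * ‖x‖) := by
        exact mul_le_mul_of_nonneg_left (T.le_opNorm x) (norm_nonneg f)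
    _ = ‖T‖ := by rw [hx, hf]; ring

lemma nrad_smul (c : ℝ) (hc : 0 ≤ c) (T : X →L[𝕜] X) :
    nrad 𝕜 X ((c : 𝕜) • T) = c * nrad 𝕜 X T := by
  have hset : {r : ℝ | ∃ x f, IsState 𝕜 X x f ∧ r = ‖f (((c : 𝕜) • T) x)‖}
      = c • {r : ℝ | ∃ x f, IsState 𝕜 X x f ∧ r = ‖f (T x)‖} := by
    ext r
    constructor
    · rintro ⟨x, f, hs, rfl⟩
      refine ⟨‖f (T x)‖, ⟨x, f, hs, rfl⟩, ?_⟩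
      simp [norm_smul, RCLike.norm_ofReal, abs_of_nonneg hc]
    · rintro ⟨r', ⟨x, f, hs, rfl⟩, rfl⟩
      refine ⟨x, f, hs, ?_⟩
      simp [norm_smul, RCLike.norm_ofReal, abs_of_nonneg hc]
  rw [nrad, hset, Real.sSup_smul_of_nonneg hc, smul_eq_mul, nrad]

lemma nrad_eq_norm (hn : nindex 𝕜 X = 1) (T : X →L[𝕜] X) : nrad 𝕜 X T = ‖T‖ := by
  refine le_antisymm (nrad_le_norm 𝕜 X T) ?_
  rcases eq_or_ne T 0 with rfl | hT
  · simpa using nrad_nonneg 𝕜 X 0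
  have hTn : (0:ℝ) < ‖T‖ := norm_pos_iff.2 hT
  have hbdd : BddBelow {r : ℝ | ∃ T : X →L[𝕜] X, ‖T‖ = 1 ∧ r = nrad 𝕜 X T} :=
    ⟨0, by rintro r ⟨T, _, rfl⟩; exact nrad_nonneg 𝕜 X T⟩
  have hmem : nrad 𝕜 X (((‖T‖⁻¹ : ℝ) : 𝕜) • T) ∈
      {r : ℝ | ∃ T : X →L[𝕜] X, ‖T‖ = 1 ∧ r = nrad 𝕜 X T} :=
    ⟨((‖T‖⁻¹ : ℝ) : 𝕜) • T, by
      rw [norm_smul ((‖T‖⁻¹ : ℝ) : 𝕜) T, RCLike.norm_ofReal,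
        abs_of_nonneg (inv_nonneg.2 hTn.le), inv_mul_cancel₀ hTn.ne'], rfl⟩
  have h1 : (1:ℝ) ≤ nrad 𝕜 X (((‖T‖⁻¹ : ℝ) : 𝕜) • T) := hn ▸ csInf_le hbdd hmem
  rw [nrad_smul 𝕜 X _ (inv_nonneg.2 hTn.le)] at h1
  calc ‖T‖ = ‖T‖ * 1 := (mul_one _).symm
    _ ≤ ‖T‖ * (‖T‖⁻¹ * nrad 𝕜 X T) := by
        exact mul_le_mul_of_nonneg_left h1 hTn.le
    _ = nrad 𝕜 X T := by field_simp

/-- if `n(X) = 1` and `X` has the BPBpp-nu with modulus `η`, then `X` is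
uniformly smooth with the same modulus: whenever `‖x₀‖ = ‖x₀*‖ = 1` and
`|x₀*(x₀)| > 1 - η(ε)`, there is `z* ∈ S_{X*}` with `|z*(x₀)| = 1`, `‖z* - x₀*‖ < ε`. -/
theorem stmt15 [CompleteSpace X] (hn : nindex 𝕜 X = 1) (η : ℝ → ℝ)
    (hη : ∀ ε : ℝ, 0 < ε → 0 < η ε ∧
      ∀ (T : X →L[𝕜] X) (x : X) (f : X →L[𝕜] 𝕜),
        nrad 𝕜 X T = 1 → IsState 𝕜 X x f → 1 - η ε < ‖f (T x)‖ →
        ∃ S : X →L[𝕜] X, nrad 𝕜 X S = 1 ∧ ‖f (S x)‖ = 1 ∧ ‖S - T‖ < ε) :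
    ∀ ε : ℝ, 0 < ε → ∀ (x₀ : X) (f₀ : X →L[𝕜] 𝕜), ‖x₀‖ = 1 → ‖f₀‖ = 1 →
      1 - η ε < ‖f₀ x₀‖ →
      ∃ z : X →L[𝕜] 𝕜, ‖z‖ = 1 ∧ ‖z x₀‖ = 1 ∧ ‖z - f₀‖ < ε := by
  intro ε hε x₀ f₀ hx₀ hf₀ hbig
  -- T = f₀ ⊗ x₀
  set T : X →L[𝕜] X := f₀.smulRight x₀ with hT
  have hTnorm : ‖T‖ = 1 := by
    rw [hT, ContinuousLinearMap.norm_smulRight_apply, hx₀, hf₀, mul_one]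
  have hTnrad : nrad 𝕜 X T = 1 := by rw [nrad_eq_norm 𝕜 X hn, hTnorm]
  -- dual vector for x₀
  have hx₀ne : x₀ ≠ 0 := by intro h; rw [h, norm_zero] at hx₀; norm_num at hx₀
  obtain ⟨f, hfnorm, hfx₀⟩ := exists_dual_vector 𝕜 x₀ (norm_ne_zero_iff.2 hx₀ne)
  have hstate : IsState 𝕜 X x₀ f := ⟨hx₀, hfnorm, by rw [hfx₀, hx₀]; norm_num⟩
  have hfx₀' : f x₀ = 1 := hstate.2.2
  have hfTx : f (T x₀) = f₀ x₀ := by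
    simp [hT, ContinuousLinearMap.smulRight_apply, hfx₀']
  obtain ⟨S, hSnrad, hSfx, hST⟩ := (hη ε hε).2 T x₀ f hTnrad hstate (by rwa [hfTx])
  refine ⟨f.comp S, ?_, ?_, ?_⟩
  · have h1 : ‖f.comp S‖ ≤ 1 := by
      calc ‖f.comp S‖ ≤ ‖f‖ * ‖S‖ := ContinuousLinearMap.opNorm_comp_le _ _
        _ = 1 := by rw [hfnorm, ← nrad_eq_norm 𝕜 X hn, hSnrad, one_mul]
    have h2 : (1:ℝ) ≤ ‖f.comp S‖ := by
      calc (1:ℝ) = ‖f (S x₀)‖ := hSfx.symm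
        _ = ‖(f.comp S) x₀‖ := rfl
        _ ≤ ‖f.comp S‖ * ‖x₀‖ := (f.comp S).le_opNorm x₀
        _ = ‖f.comp S‖ := by rw [hx₀, mul_one]
    linarith
  · exact hSfx
  · have hcomp : f.comp T = f₀ := by
      ext x
      simp [hT, ContinuousLinearMap.smulRight_apply, hfx₀', mul_comm]
    calc ‖f.comp S - f₀‖ = ‖f.comp (S - T)‖ := by rw [← hcomp, ← ContinuousLinearMap.comp_sub]
      _ ≤ ‖f‖ * ‖S - T‖ := ContinuousLinearMap.opNorm_comp_le _ _
      _ = ‖S - T‖ := by rw [hfnorm, one_mul]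
      _ < ε := hST
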